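/- arXiv:1812.08060 — 2 statements merged into one kernel-verified Lean document; each statement's English description precedes it below -/
import Mathlib

section
/- For the sequences f_3, g_3, h_3, t_3, s_3 defined by the Tower of Hanoi d=3 recursion with initial values f_3(0)=1, g_3(0)=0, h_3(0)=1, t_3(0)=0, s_3(0)=3, one has f_3(n) < g_3(n) < h_3(n) < t_3(n) < s_3(n) for all integers n >= 1. -/
/-- One step of the `d = 3` Tower of Hanoi dimer-monomer recursion, sending
`(f, g, h, t, s)` at stage `n` to their values at stage `n + 1`. -/
def TH3Step (v : ℕ × ℕ × ℕ × ℕ × ℕ) : ℕ × ℕ × ℕ × ℕ × ℕ :=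
  let f := v.1; let g := v.2.1; let h := v.2.2.1; let t := v.2.2.2.1; let s := v.2.2.2.2
  let P := f + 3*g + 3*h + t
  let Q := f + 2*g + h
  let R := f + g
  let X := g + 3*h + 3*t + s
  let Y := g + 2*h + t
  let W := g + h
  (P^4 + 6*P^2*Q^2 + 12*P*Q^2*R + 3*Q^4 + 4*P*R^3 + 4*f*Q^3 + 12*Q^2*R^2
      + 12*f*Q*R^2 + 3*R^4 + 6*f^2*R^2 + f^4,
   P^3*X + 3*P*Q^2*X + 3*P^2*Q*Y + 3*P*Q^2*W + 3*Q^2*R*X + 3*Q^3*Y + 6*P*Q*R*Y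
      + R^3*X + 3*f*Q^2*Y + 6*Q*R^2*Y + 3*P*R^2*W + 6*Q^2*R*W + g*Q^3 + 3*f*R^2*Y
      + 6*f*Q*R*W + 3*W*R^3 + 3*g*Q*R^2 + 3*f^2*R*W + 3*f*g*R^2 + f^3*g,
   P^2*X^2 + Q^2*X^2 + 4*P*Q*X*Y + P^2*Y^2 + Q^2*Y^2 + 4*P*Q*Y*W + 2*P*R*Y^2
      + 2*Q^2*Y^2 + 2*Q^2*X*W + 4*Q*R*X*Y + 2*f*Q*Y^2 + 2*g*Q^2*Y + 8*Q*R*Y*W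
      + 2*R^2*X*W + 2*P*R*W^2 + 2*R^2*Y^2 + 2*Q^2*W^2 + 3*R^2*W^2 + 2*f*Q*W^2
      + 4*f*R*Y*W + 4*g*Q*R*W + 2*g*R^2*Y + g^2*R^2 + f^2*W^2 + 4*f*g*R*W + f^2*g^2,
   P*X^3 + 3*P*X*Y^2 + 3*Q*X^2*Y + 3*P*Y^2*W + 3*R*X*Y^2 + 3*Q*Y^3 + 6*Q*X*Y*W
      + P*W^3 + 3*g*Q*Y^2 + 3*R*X*W^2 + 6*R*Y^2*W + 6*Q*Y*W^2 + f*Y^3 + 3*g*Q*W^2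
      + 6*g*R*Y*W + 3*f*Y*W^2 + 3*R*W^3 + 3*g^2*R*W + 3*f*g*W^2 + f*g^3,
   X^4 + 6*X^2*Y^2 + 3*Y^4 + 12*X*Y^2*W + 4*X*W^3 + 4*g*Y^3 + 12*Y^2*W^2 + 3*W^4
      + 12*g*Y*W^2 + 6*g^2*W^2 + g^4)

/-- The sequences `(f_3(n), g_3(n), h_3(n), t_3(n), s_3(n))` with initial values
`(1, 0, 1, 0, 3)`. -/
def TH3Seq : ℕ → ℕ × ℕ × ℕ × ℕ × ℕ
  | 0 => (1, 0, 1, 0, 3)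
  | n + 1 => TH3Step (TH3Seq n)



set_option maxHeartbeats 1000000 in
lemma TH3L0 (p q r a x y w b : ℕ) (hp : 0 < p) (h1 : p < x) (h2 : q < y)
    (h3 : r < w) (h4 : a < b) :
    p^4 + 6*p^2*q^2 + 12*p*q^2*r + 3*q^4 + 4*p*r^3 + 4*a*q^3 + 12*q^2*r^2 + 12*a*q*r^2 + 3*r^4 + 6*a^2*r^2 + a^4 <
    p^3*x + 3*p*q^2*x + 3*p^2*q*y + 3*p*q^2*w + 3*q^2*r*x + 3*q^3*y + 6*p*q*r*y + r^3*x + 3*a*q^2*y + 6*q*r^2*y + 3*p*r^2*w + 6*q^2*r*w + b*q^3 + 3*a*r^2*y + 6*a*q*r*w + 3*w*r^3 + 3*b*q*r^2 + 3*a^2*r*w + 3*a*b*r^2 + a^3*b := by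
  have hx : 0 < x := hp.trans h1
  have hstrict : (p^3)*p < (p^3)*x :=
    mul_lt_mul_of_pos_left h1 (pow_pos hp 3)
  have hrest : 3*(p*q^2)*p + 3*(p^2*q)*q + 3*(p*q^2)*r + 3*(q^2*r)*p + 6*(p*q*r)*q + 3*(q^3)*q + (r^3)*p + 3*(p*r^2)*r + 3*(q^2*a)*q + (q^3)*a + 6*(q*r^2)*q + 6*(q^2*r)*r + 3*(r^2*a)*q + 6*(q*r*a)*r + 3*(q*r^2)*a + 3*(r^3)*r + 3*(r*a^2)*r + 3*(r^2*a)*a + (a^3)*a ≤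
      3*(p*q^2)*x + 3*(p^2*q)*y + 3*(p*q^2)*w + 3*(q^2*r)*x + 6*(p*q*r)*y + 3*(q^3)*y + (r^3)*x + 3*(p*r^2)*w + 3*(q^2*a)*y + (q^3)*b + 6*(q*r^2)*y + 6*(q^2*r)*w + 3*(r^2*a)*y + 6*(q*r*a)*w + 3*(q*r^2)*b + 3*(r^3)*w + 3*(r*a^2)*w + 3*(r^2*a)*b + (a^3)*b :=
    Nat.add_le_add (Nat.add_le_add (Nat.add_le_add (Nat.add_le_add (Nat.add_le_add (Nat.add_le_add (Nat.add_le_add (Nat.add_le_add (Nat.add_le_add (Nat.add_le_add (Nat.add_le_add (Nat.add_le_add (Nat.add_le_add (Nat.add_le_add (Nat.add_le_add (Nat.add_le_add (Nat.add_le_add (Nat.add_le_add (Nat.mul_le_mul (le_refl _) (le_of_lt h1)) (Nat.mul_le_mul (le_refl _) (le_of_lt h2))) (Nat.mul_le_mul (le_refl _) (le_of_lt h3))) (Nat.mul_le_mul (le_refl _) (le_of_lt h1))) (Nat.mul_le_mul (le_refl _) (le_of_lt h2))) (Nat.mul_le_mul (le_refl _) (le_of_lt h2))) (Nat.mul_le_mul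 (le_refl _) (le_of_lt h1))) (Nat.mul_le_mul (le_refl _) (le_of_lt h3))) (Nat.mul_le_mul (le_refl _) (le_of_lt h2))) (Nat.mul_le_mul (le_refl _) (le_of_lt h4))) (Nat.mul_le_mul (le_refl _) (le_of_lt h2))) (Nat.mul_le_mul (le_refl _) (le_of_lt h3))) (Nat.mul_le_mul (le_refl _) (le_of_lt h2))) (Nat.mul_le_mul (le_refl _) (le_of_lt h3))) (Nat.mul_le_mul (le_refl _) (le_of_lt h4))) (Nat.mul_le_mul (le_refl _) (le_of_lt h3))) (Nat.mul_le_mul (le_refl _) (le_of_lt h3))) (Nat.mul_le_mul (le_refl _) (le_of_lt h4))) (Nat.mul_le_mul (le_refl _) (le_of_lt h4))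
  calc p^4 + 6*p^2*q^2 + 12*p*q^2*r + 3*q^4 + 4*p*r^3 + 4*a*q^3 + 12*q^2*r^2 + 12*a*q*r^2 + 3*r^4 + 6*a^2*r^2 + a^4
      = (p^3)*p + (3*(p*q^2)*p + 3*(p^2*q)*q + 3*(p*q^2)*r + 3*(q^2*r)*p + 6*(p*q*r)*q + 3*(q^3)*q + (r^3)*p + 3*(p*r^2)*r + 3*(q^2*a)*q + (q^3)*a + 6*(q*r^2)*q + 6*(q^2*r)*r + 3*(r^2*a)*q + 6*(q*r*a)*r + 3*(q*r^2)*a + 3*(r^3)*r + 3*(r*a^2)*r + 3*(r^2*a)*a + (a^3)*a) := by ring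
    _ < (p^3)*x + (3*(p*q^2)*x + 3*(p^2*q)*y + 3*(p*q^2)*w + 3*(q^2*r)*x + 6*(p*q*r)*y + 3*(q^3)*y + (r^3)*x + 3*(p*r^2)*w + 3*(q^2*a)*y + (q^3)*b + 6*(q*r^2)*y + 6*(q^2*r)*w + 3*(r^2*a)*y + 6*(q*r*a)*w + 3*(q*r^2)*b + 3*(r^3)*w + 3*(r*a^2)*w + 3*(r^2*a)*b + (a^3)*b) := add_lt_add_of_lt_of_le hstrict hrest
    _ = p^3*x + 3*p*q^2*x + 3*p^2*q*y + 3*p*q^2*w + 3*q^2*r*x + 3*q^3*y + 6*p*q*r*y + r^3*x + 3*a*q^2*y + 6*q*r^2*y + 3*p*r^2*w + 6*q^2*r*w + b*q^3 + 3*a*r^2*y + 6*a*q*r*w + 3*w*r^3 + 3*b*q*r^2 + 3*a^2*r*w + 3*a*b*r^2 + a^3*b := by ring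


set_option maxHeartbeats 1000000 in
lemma TH3L1 (p q r a x y w b : ℕ) (hp : 0 < p) (h1 : p < x) (h2 : q < y)
    (h3 : r < w) (h4 : a < b) :
    p^3*x + 3*p*q^2*x + 3*p^2*q*y + 3*p*q^2*w + 3*q^2*r*x + 3*q^3*y + 6*p*q*r*y + r^3*x + 3*a*q^2*y + 6*q*r^2*y + 3*p*r^2*w + 6*q^2*r*w + b*q^3 + 3*a*r^2*y + 6*a*q*r*w + 3*w*r^3 + 3*b*q*r^2 + 3*a^2*r*w + 3*a*b*r^2 + a^3*b <
    p^2*x^2 + q^2*x^2 + 4*p*q*x*y + p^2*y^2 + q^2*y^2 + 4*p*q*y*w + 2*p*r*y^2 + 2*q^2*y^2 + 2*q^2*x*w + 4*q*r*x*y + 2*a*q*y^2 + 2*b*q^2*y + 8*q*r*y*w + 2*r^2*x*w + 2*p*r*w^2 + 2*r^2*y^2 + 2*q^2*w^2 + 3*r^2*w^2 + 2*a*q*w^2 + 4*a*r*y*w + 4*b*q*r*w + 2*b*r^2*y + b^2*r^2 + a^2*w^2 + 4*a*b*r*w + a^2*b^2 := by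
  have hx : 0 < x := hp.trans h1
  have hstrict : (p^2*x)*p < (p^2*x)*x :=
    mul_lt_mul_of_pos_left h1 (Nat.mul_pos (pow_pos hp 2) hx)
  have hrest : (q^2*x)*p + 2*(p*q*x)*q + 2*(p*q*y)*p + (p^2*y)*q + 3*(p*q*w)*q + 2*(q^2*x)*r + (q*r*x)*q + 3*(q^2*y)*q + (p*q*y)*r + 2*(p*r*y)*q + 3*(q*r*y)*p + (r^2*x)*r + 2*(q*a*y)*q + (q^2*y)*a + 4*(q*r*y)*r + 2*(r^2*y)*q + (r^2*w)*p + 2*(p*r*w)*r + 4*(q*r*w)*q + 2*(q^2*w)*r + (q^2*b)*q + (r*a*y)*r + 2*(r^2*y)*a + 2*(q*a*w)*r + 3*(r*a*w)*q + (q*r*w)*a + 3*(r^2*w)*r + 3*(q*r*b)*r + (a^2*w)*r + 2*(r*a*w)*a + (r^2*b)*a + 2*(r*a*b)*r + (a^2*b)*a ≤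
      (q^2*x)*x + 2*(p*q*x)*y + 2*(p*q*y)*x + (p^2*y)*y + 3*(p*q*w)*y + 2*(q^2*x)*w + (q*r*x)*y + 3*(q^2*y)*y + (p*q*y)*w + 2*(p*r*y)*y + 3*(q*r*y)*x + (r^2*x)*w + 2*(q*a*y)*y + (q^2*y)*b + 4*(q*r*y)*w + 2*(r^2*y)*y + (r^2*w)*x + 2*(p*r*w)*w + 4*(q*r*w)*y + 2*(q^2*w)*w + (q^2*b)*y + (r*a*y)*w + 2*(r^2*y)*b + 2*(q*a*w)*w + 3*(r*a*w)*y + (q*r*w)*b + 3*(r^2*w)*w + 3*(q*r*b)*w + (a^2*w)*w + 2*(r*a*w)*b + (r^2*b)*b + 2*(r*a*b)*w + (a^2*b)*b :=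
    Nat.add_le_add (Nat.add_le_add (Nat.add_le_add (Nat.add_le_add (Nat.add_le_add (Nat.add_le_add (Nat.add_le_add (Nat.add_le_add (Nat.add_le_add (Nat.add_le_add (Nat.add_le_add (Nat.add_le_add (Nat.add_le_add (Nat.add_le_add (Nat.add_le_add (Nat.add_le_add (Nat.add_le_add (Nat.add_le_add (Nat.add_le_add (Nat.add_le_add (Nat.add_le_add (Nat.add_le_add (Nat.add_le_add (Nat.add_le_add (Nat.add_le_add (Nat.add_le_add (Nat.add_le_add (Nat.add_le_add (Nat.add_le_add (Nat.add_le_add (Nat.add_le_add (Nat.add_le_add (Nat.mul_le_mul (le_refl _) (le_of_lt h1)) (Nat.mul_le_mul (le_refl _) (le_of_lt h2))) (Nat.mul_le_mul (le_refl _) (le_of_lt h1))) (Nat.mul_le_mul (le_refl _) (le_of_lt h2))) (Nat.mul_le_mul (le_refl _) (le_of_lt h2))) (Nat.mul_le_mul (le_refl _) (le_of_lt h3))) (Nat.mul_le_mul (le_refl _) (le_of_lt h2))) (Nat.mul_le_mul (le_refl _) (le_of_lt h2))) (Nat.mul_le_mul (le_refl _) (le_of_lt h3))) (Nat.mul_le_mul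 (le_refl _) (le_of_lt h2))) (Nat.mul_le_mul (le_refl _) (le_of_lt h1))) (Nat.mul_le_mul (le_refl _) (le_of_lt h3))) (Nat.mul_le_mul (le_refl _) (le_of_lt h2))) (Nat.mul_le_mul (le_refl _) (le_of_lt h4))) (Nat.mul_le_mul (le_refl _) (le_of_lt h3))) (Nat.mul_le_mul (le_refl _) (le_of_lt h2))) (Nat.mul_le_mul (le_refl _) (le_of_lt h1))) (Nat.mul_le_mul (le_refl _) (le_of_lt h3))) (Nat.mul_le_mul (le_refl _) (le_of_lt h2))) (Nat.mul_le_mul (le_refl _) (le_of_lt h3))) (Nat.mul_le_mul (le_refl _) (le_of_lt h2))) (Nat.mul_le_mul (le_refl _) (le_of_lt h3))) (Nat.mul_le_mul (le_refl _) (le_of_lt h4))) (Nat.mul_le_mul (le_refl _) (le_of_lt h3))) (Nat.mul_le_mul (le_refl _) (le_of_lt h2))) (Nat.mul_le_mul (le_refl _) (le_of_lt h4))) (Nat.mul_le_mul (le_refl _) (le_of_lt h3))) (Nat.mul_le_mul (le_refl _) (le_of_lt h3))) (Nat.mul_le_mul (le_refl _) (le_of_lt h3))) (Nat.mul_le_mul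 (le_refl _) (le_of_lt h4))) (Nat.mul_le_mul (le_refl _) (le_of_lt h4))) (Nat.mul_le_mul (le_refl _) (le_of_lt h3))) (Nat.mul_le_mul (le_refl _) (le_of_lt h4))
  calc p^3*x + 3*p*q^2*x + 3*p^2*q*y + 3*p*q^2*w + 3*q^2*r*x + 3*q^3*y + 6*p*q*r*y + r^3*x + 3*a*q^2*y + 6*q*r^2*y + 3*p*r^2*w + 6*q^2*r*w + b*q^3 + 3*a*r^2*y + 6*a*q*r*w + 3*w*r^3 + 3*b*q*r^2 + 3*a^2*r*w + 3*a*b*r^2 + a^3*b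
      = (p^2*x)*p + ((q^2*x)*p + 2*(p*q*x)*q + 2*(p*q*y)*p + (p^2*y)*q + 3*(p*q*w)*q + 2*(q^2*x)*r + (q*r*x)*q + 3*(q^2*y)*q + (p*q*y)*r + 2*(p*r*y)*q + 3*(q*r*y)*p + (r^2*x)*r + 2*(q*a*y)*q + (q^2*y)*a + 4*(q*r*y)*r + 2*(r^2*y)*q + (r^2*w)*p + 2*(p*r*w)*r + 4*(q*r*w)*q + 2*(q^2*w)*r + (q^2*b)*q + (r*a*y)*r + 2*(r^2*y)*a + 2*(q*a*w)*r + 3*(r*a*w)*q + (q*r*w)*a + 3*(r^2*w)*r + 3*(q*r*b)*r + (a^2*w)*r + 2*(r*a*w)*a + (r^2*b)*a + 2*(r*a*b)*r + (a^2*b)*a) := by ring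
    _ < (p^2*x)*x + ((q^2*x)*x + 2*(p*q*x)*y + 2*(p*q*y)*x + (p^2*y)*y + 3*(p*q*w)*y + 2*(q^2*x)*w + (q*r*x)*y + 3*(q^2*y)*y + (p*q*y)*w + 2*(p*r*y)*y + 3*(q*r*y)*x + (r^2*x)*w + 2*(q*a*y)*y + (q^2*y)*b + 4*(q*r*y)*w + 2*(r^2*y)*y + (r^2*w)*x + 2*(p*r*w)*w + 4*(q*r*w)*y + 2*(q^2*w)*w + (q^2*b)*y + (r*a*y)*w + 2*(r^2*y)*b + 2*(q*a*w)*w + 3*(r*a*w)*y + (q*r*w)*b + 3*(r^2*w)*w + 3*(q*r*b)*w + (a^2*w)*w + 2*(r*a*w)*b + (r^2*b)*b + 2*(r*a*b)*w + (a^2*b)*b) := add_lt_add_of_lt_of_le hstrict hrest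
    _ = p^2*x^2 + q^2*x^2 + 4*p*q*x*y + p^2*y^2 + q^2*y^2 + 4*p*q*y*w + 2*p*r*y^2 + 2*q^2*y^2 + 2*q^2*x*w + 4*q*r*x*y + 2*a*q*y^2 + 2*b*q^2*y + 8*q*r*y*w + 2*r^2*x*w + 2*p*r*w^2 + 2*r^2*y^2 + 2*q^2*w^2 + 3*r^2*w^2 + 2*a*q*w^2 + 4*a*r*y*w + 4*b*q*r*w + 2*b*r^2*y + b^2*r^2 + a^2*w^2 + 4*a*b*r*w + a^2*b^2 := by ring


set_option maxHeartbeats 1000000 in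
lemma TH3L2 (p q r a x y w b : ℕ) (hp : 0 < p) (h1 : p < x) (h2 : q < y)
    (h3 : r < w) (h4 : a < b) :
    p^2*x^2 + q^2*x^2 + 4*p*q*x*y + p^2*y^2 + q^2*y^2 + 4*p*q*y*w + 2*p*r*y^2 + 2*q^2*y^2 + 2*q^2*x*w + 4*q*r*x*y + 2*a*q*y^2 + 2*b*q^2*y + 8*q*r*y*w + 2*r^2*x*w + 2*p*r*w^2 + 2*r^2*y^2 + 2*q^2*w^2 + 3*r^2*w^2 + 2*a*q*w^2 + 4*a*r*y*w + 4*b*q*r*w + 2*b*r^2*y + b^2*r^2 + a^2*w^2 + 4*a*b*r*w + a^2*b^2 <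
    p*x^3 + 3*p*x*y^2 + 3*q*x^2*y + 3*p*y^2*w + 3*r*x*y^2 + 3*q*y^3 + 6*q*x*y*w + p*w^3 + 3*b*q*y^2 + 3*r*x*w^2 + 6*r*y^2*w + 6*q*y*w^2 + a*y^3 + 3*b*q*w^2 + 6*b*r*y*w + 3*a*y*w^2 + 3*r*w^3 + 3*b^2*r*w + 3*a*b*w^2 + a*b^3 := by
  have hx : 0 < x := hp.trans h1
  have hstrict : (p*x^2)*p < (p*x^2)*x :=
    mul_lt_mul_of_pos_left h1 (Nat.mul_pos hp (pow_pos hx 2))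
  have hrest : (q*x^2)*q + 2*(p*x*y)*q + 2*(q*x*y)*p + (p*y^2)*p + 3*(q*y^2)*q + 3*(p*y*w)*q + (q*y*w)*p + 2*(r*y^2)*p + 2*(q*x*w)*q + (r*x*y)*q + 3*(q*x*y)*r + (q*y^2)*a + (a*y^2)*q + 2*(q*y*b)*q + 4*(r*y*w)*q + 4*(q*y*w)*r + 2*(r*x*w)*r + (p*w^2)*r + (r*w^2)*p + 2*(r*y^2)*r + 2*(q*w^2)*q + 3*(r*w^2)*r + 2*(a*w^2)*q + 3*(r*y*w)*a + (a*y*w)*r + 3*(q*w*b)*r + (r*w*b)*q + 2*(r*y*b)*r + (r*b^2)*r + (a*w^2)*a + 2*(r*w*b)*a + 2*(a*w*b)*r + (a*b^2)*a ≤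
      (q*x^2)*y + 2*(p*x*y)*y + 2*(q*x*y)*x + (p*y^2)*x + 3*(q*y^2)*y + 3*(p*y*w)*y + (q*y*w)*x + 2*(r*y^2)*x + 2*(q*x*w)*y + (r*x*y)*y + 3*(q*x*y)*w + (q*y^2)*b + (a*y^2)*y + 2*(q*y*b)*y + 4*(r*y*w)*y + 4*(q*y*w)*w + 2*(r*x*w)*w + (p*w^2)*w + (r*w^2)*x + 2*(r*y^2)*w + 2*(q*w^2)*y + 3*(r*w^2)*w + 2*(a*w^2)*y + 3*(r*y*w)*b + (a*y*w)*w + 3*(q*w*b)*w + (r*w*b)*y + 2*(r*y*b)*w + (r*b^2)*w + (a*w^2)*b + 2*(r*w*b)*b + 2*(a*w*b)*w + (a*b^2)*b :=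
    Nat.add_le_add (Nat.add_le_add (Nat.add_le_add (Nat.add_le_add (Nat.add_le_add (Nat.add_le_add (Nat.add_le_add (Nat.add_le_add (Nat.add_le_add (Nat.add_le_add (Nat.add_le_add (Nat.add_le_add (Nat.add_le_add (Nat.add_le_add (Nat.add_le_add (Nat.add_le_add (Nat.add_le_add (Nat.add_le_add (Nat.add_le_add (Nat.add_le_add (Nat.add_le_add (Nat.add_le_add (Nat.add_le_add (Nat.add_le_add (Nat.add_le_add (Nat.add_le_add (Nat.add_le_add (Nat.add_le_add (Nat.add_le_add (Nat.add_le_add (Nat.add_le_add (Nat.add_le_add (Nat.mul_le_mul (le_refl _) (le_of_lt h2)) (Nat.mul_le_mul (le_refl _) (le_of_lt h2))) (Nat.mul_le_mul (le_refl _) (le_of_lt h1))) (Nat.mul_le_mul (le_refl _) (le_of_lt h1))) (Nat.mul_le_mul (le_refl _) (le_of_lt h2))) (Nat.mul_le_mul (le_refl _) (le_of_lt h2))) (Nat.mul_le_mul (le_refl _) (le_of_lt h1))) (Nat.mul_le_mul (le_refl _) (le_of_lt h1))) (Nat.mul_le_mul (le_refl _) (le_of_lt h2))) (Nat.mul_le_mul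 (le_refl _) (le_of_lt h2))) (Nat.mul_le_mul (le_refl _) (le_of_lt h3))) (Nat.mul_le_mul (le_refl _) (le_of_lt h4))) (Nat.mul_le_mul (le_refl _) (le_of_lt h2))) (Nat.mul_le_mul (le_refl _) (le_of_lt h2))) (Nat.mul_le_mul (le_refl _) (le_of_lt h2))) (Nat.mul_le_mul (le_refl _) (le_of_lt h3))) (Nat.mul_le_mul (le_refl _) (le_of_lt h3))) (Nat.mul_le_mul (le_refl _) (le_of_lt h3))) (Nat.mul_le_mul (le_refl _) (le_of_lt h1))) (Nat.mul_le_mul (le_refl _) (le_of_lt h3))) (Nat.mul_le_mul (le_refl _) (le_of_lt h2))) (Nat.mul_le_mul (le_refl _) (le_of_lt h3))) (Nat.mul_le_mul (le_refl _) (le_of_lt h2))) (Nat.mul_le_mul (le_refl _) (le_of_lt h4))) (Nat.mul_le_mul (le_refl _) (le_of_lt h3))) (Nat.mul_le_mul (le_refl _) (le_of_lt h3))) (Nat.mul_le_mul (le_refl _) (le_of_lt h2))) (Nat.mul_le_mul (le_refl _) (le_of_lt h3))) (Nat.mul_le_mul (le_refl _) (le_of_lt h3))) (Nat.mul_le_mul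 (le_refl _) (le_of_lt h4))) (Nat.mul_le_mul (le_refl _) (le_of_lt h4))) (Nat.mul_le_mul (le_refl _) (le_of_lt h3))) (Nat.mul_le_mul (le_refl _) (le_of_lt h4))
  calc p^2*x^2 + q^2*x^2 + 4*p*q*x*y + p^2*y^2 + q^2*y^2 + 4*p*q*y*w + 2*p*r*y^2 + 2*q^2*y^2 + 2*q^2*x*w + 4*q*r*x*y + 2*a*q*y^2 + 2*b*q^2*y + 8*q*r*y*w + 2*r^2*x*w + 2*p*r*w^2 + 2*r^2*y^2 + 2*q^2*w^2 + 3*r^2*w^2 + 2*a*q*w^2 + 4*a*r*y*w + 4*b*q*r*w + 2*b*r^2*y + b^2*r^2 + a^2*w^2 + 4*a*b*r*w + a^2*b^2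
      = (p*x^2)*p + ((q*x^2)*q + 2*(p*x*y)*q + 2*(q*x*y)*p + (p*y^2)*p + 3*(q*y^2)*q + 3*(p*y*w)*q + (q*y*w)*p + 2*(r*y^2)*p + 2*(q*x*w)*q + (r*x*y)*q + 3*(q*x*y)*r + (q*y^2)*a + (a*y^2)*q + 2*(q*y*b)*q + 4*(r*y*w)*q + 4*(q*y*w)*r + 2*(r*x*w)*r + (p*w^2)*r + (r*w^2)*p + 2*(r*y^2)*r + 2*(q*w^2)*q + 3*(r*w^2)*r + 2*(a*w^2)*q + 3*(r*y*w)*a + (a*y*w)*r + 3*(q*w*b)*r + (r*w*b)*q + 2*(r*y*b)*r + (r*b^2)*r + (a*w^2)*a + 2*(r*w*b)*a + 2*(a*w*b)*r + (a*b^2)*a) := by ring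
    _ < (p*x^2)*x + ((q*x^2)*y + 2*(p*x*y)*y + 2*(q*x*y)*x + (p*y^2)*x + 3*(q*y^2)*y + 3*(p*y*w)*y + (q*y*w)*x + 2*(r*y^2)*x + 2*(q*x*w)*y + (r*x*y)*y + 3*(q*x*y)*w + (q*y^2)*b + (a*y^2)*y + 2*(q*y*b)*y + 4*(r*y*w)*y + 4*(q*y*w)*w + 2*(r*x*w)*w + (p*w^2)*w + (r*w^2)*x + 2*(r*y^2)*w + 2*(q*w^2)*y + 3*(r*w^2)*w + 2*(a*w^2)*y + 3*(r*y*w)*b + (a*y*w)*w + 3*(q*w*b)*w + (r*w*b)*y + 2*(r*y*b)*w + (r*b^2)*w + (a*w^2)*b + 2*(r*w*b)*b + 2*(a*w*b)*w + (a*b^2)*b) := add_lt_add_of_lt_of_le hstrict hrest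
    _ = p*x^3 + 3*p*x*y^2 + 3*q*x^2*y + 3*p*y^2*w + 3*r*x*y^2 + 3*q*y^3 + 6*q*x*y*w + p*w^3 + 3*b*q*y^2 + 3*r*x*w^2 + 6*r*y^2*w + 6*q*y*w^2 + a*y^3 + 3*b*q*w^2 + 6*b*r*y*w + 3*a*y*w^2 + 3*r*w^3 + 3*b^2*r*w + 3*a*b*w^2 + a*b^3 := by ring


set_option maxHeartbeats 1000000 in
lemma TH3L3 (p q r a x y w b : ℕ) (hp : 0 < p) (h1 : p < x) (h2 : q < y)
    (h3 : r < w) (h4 : a < b) :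
    p*x^3 + 3*p*x*y^2 + 3*q*x^2*y + 3*p*y^2*w + 3*r*x*y^2 + 3*q*y^3 + 6*q*x*y*w + p*w^3 + 3*b*q*y^2 + 3*r*x*w^2 + 6*r*y^2*w + 6*q*y*w^2 + a*y^3 + 3*b*q*w^2 + 6*b*r*y*w + 3*a*y*w^2 + 3*r*w^3 + 3*b^2*r*w + 3*a*b*w^2 + a*b^3 <
    x^4 + 6*x^2*y^2 + 3*y^4 + 12*x*y^2*w + 4*x*w^3 + 4*b*y^3 + 12*y^2*w^2 + 3*w^4 + 12*b*y*w^2 + 6*b^2*w^2 + b^4 := by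
  have hx : 0 < x := hp.trans h1
  have hstrict : (x^3)*p < (x^3)*x :=
    mul_lt_mul_of_pos_left h1 (pow_pos hx 3)
  have hrest : 3*(x*y^2)*p + 3*(x^2*y)*q + 3*(y^2*w)*p + 3*(x*y^2)*r + 3*(y^3)*q + 6*(x*y*w)*q + (w^3)*p + 3*(y^2*b)*q + 3*(x*w^2)*r + 6*(y^2*w)*r + 6*(y*w^2)*q + (y^3)*a + 3*(w^2*b)*q + 6*(y*w*b)*r + 3*(y*w^2)*a + 3*(w^3)*r + 3*(w*b^2)*r + 3*(w^2*b)*a + (b^3)*a ≤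
      3*(x*y^2)*x + 3*(x^2*y)*y + 3*(y^2*w)*x + 3*(x*y^2)*w + 3*(y^3)*y + 6*(x*y*w)*y + (w^3)*x + 3*(y^2*b)*y + 3*(x*w^2)*w + 6*(y^2*w)*w + 6*(y*w^2)*y + (y^3)*b + 3*(w^2*b)*y + 6*(y*w*b)*w + 3*(y*w^2)*b + 3*(w^3)*w + 3*(w*b^2)*w + 3*(w^2*b)*b + (b^3)*b :=
    Nat.add_le_add (Nat.add_le_add (Nat.add_le_add (Nat.add_le_add (Nat.add_le_add (Nat.add_le_add (Nat.add_le_add (Nat.add_le_add (Nat.add_le_add (Nat.add_le_add (Nat.add_le_add (Nat.add_le_add (Nat.add_le_add (Nat.add_le_add (Nat.add_le_add (Nat.add_le_add (Nat.add_le_add (Nat.add_le_add (Nat.mul_le_mul (le_refl _) (le_of_lt h1)) (Nat.mul_le_mul (le_refl _) (le_of_lt h2))) (Nat.mul_le_mul (le_refl _) (le_of_lt h1))) (Nat.mul_le_mul (le_refl _) (le_of_lt h3))) (Nat.mul_le_mul (le_refl _) (le_of_lt h2))) (Nat.mul_le_mul (le_refl _) (le_of_lt h2))) (Nat.mul_le_mul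 (le_refl _) (le_of_lt h1))) (Nat.mul_le_mul (le_refl _) (le_of_lt h2))) (Nat.mul_le_mul (le_refl _) (le_of_lt h3))) (Nat.mul_le_mul (le_refl _) (le_of_lt h3))) (Nat.mul_le_mul (le_refl _) (le_of_lt h2))) (Nat.mul_le_mul (le_refl _) (le_of_lt h4))) (Nat.mul_le_mul (le_refl _) (le_of_lt h2))) (Nat.mul_le_mul (le_refl _) (le_of_lt h3))) (Nat.mul_le_mul (le_refl _) (le_of_lt h4))) (Nat.mul_le_mul (le_refl _) (le_of_lt h3))) (Nat.mul_le_mul (le_refl _) (le_of_lt h3))) (Nat.mul_le_mul (le_refl _) (le_of_lt h4))) (Nat.mul_le_mul (le_refl _) (le_of_lt h4))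
  calc p*x^3 + 3*p*x*y^2 + 3*q*x^2*y + 3*p*y^2*w + 3*r*x*y^2 + 3*q*y^3 + 6*q*x*y*w + p*w^3 + 3*b*q*y^2 + 3*r*x*w^2 + 6*r*y^2*w + 6*q*y*w^2 + a*y^3 + 3*b*q*w^2 + 6*b*r*y*w + 3*a*y*w^2 + 3*r*w^3 + 3*b^2*r*w + 3*a*b*w^2 + a*b^3
      = (x^3)*p + (3*(x*y^2)*p + 3*(x^2*y)*q + 3*(y^2*w)*p + 3*(x*y^2)*r + 3*(y^3)*q + 6*(x*y*w)*q + (w^3)*p + 3*(y^2*b)*q + 3*(x*w^2)*r + 6*(y^2*w)*r + 6*(y*w^2)*q + (y^3)*a + 3*(w^2*b)*q + 6*(y*w*b)*r + 3*(y*w^2)*a + 3*(w^3)*r + 3*(w*b^2)*r + 3*(w^2*b)*a + (b^3)*a) := by ring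
    _ < (x^3)*x + (3*(x*y^2)*x + 3*(x^2*y)*y + 3*(y^2*w)*x + 3*(x*y^2)*w + 3*(y^3)*y + 6*(x*y*w)*y + (w^3)*x + 3*(y^2*b)*y + 3*(x*w^2)*w + 6*(y^2*w)*w + 6*(y*w^2)*y + (y^3)*b + 3*(w^2*b)*y + 6*(y*w*b)*w + 3*(y*w^2)*b + 3*(w^3)*w + 3*(w*b^2)*w + 3*(w^2*b)*b + (b^3)*b) := add_lt_add_of_lt_of_le hstrict hrest
    _ = x^4 + 6*x^2*y^2 + 3*y^4 + 12*x*y^2*w + 4*x*w^3 + 4*b*y^3 + 12*y^2*w^2 + 3*w^4 + 12*b*y*w^2 + 6*b^2*w^2 + b^4 := by ring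


set_option maxHeartbeats 1000000 in
lemma TH3_step_inv (v : ℕ × ℕ × ℕ × ℕ × ℕ) (hf : 0 < v.1) (h1 : v.1 < v.2.1)
    (h2 : v.2.1 < v.2.2.1) (h3 : v.2.2.1 < v.2.2.2.1) (h4 : v.2.2.2.1 < v.2.2.2.2) :
    0 < (TH3Step v).1 ∧ (TH3Step v).1 < (TH3Step v).2.1 ∧
    (TH3Step v).2.1 < (TH3Step v).2.2.1 ∧ (TH3Step v).2.2.1 < (TH3Step v).2.2.2.1 ∧
    (TH3Step v).2.2.2.1 < (TH3Step v).2.2.2.2 := by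
  obtain ⟨f, g, h, t, s⟩ := v
  simp only at hf h1 h2 h3 h4
  simp only [TH3Step]
  refine ⟨?_, ?_, ?_, ?_, ?_⟩
  · calc 0 < f^4 := pow_pos hf 4
      _ ≤ _ := Nat.le_add_left _ _
  · exact TH3L0 (f + 3*g + 3*h + t) (f + 2*g + h) (f + g) f (g + 3*h + 3*t + s)
      (g + 2*h + t) (g + h) g (by omega) (by omega) (by omega) (by omega) (by omega)
  · exact TH3L1 (f + 3*g + 3*h + t) (f + 2*g + h) (f + g) f (g + 3*h + 3*t + s)
      (g + 2*h + t) (g + h) g (by omega) (by omega) (by omega) (by omega) (by omega)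
  · exact TH3L2 (f + 3*g + 3*h + t) (f + 2*g + h) (f + g) f (g + 3*h + 3*t + s)
      (g + 2*h + t) (g + h) g (by omega) (by omega) (by omega) (by omega) (by omega)
  · exact TH3L3 (f + 3*g + 3*h + t) (f + 2*g + h) (f + g) f (g + 3*h + 3*t + s)
      (g + 2*h + t) (g + h) g (by omega) (by omega) (by omega) (by omega) (by omega)

lemma TH3_inv (n : ℕ) (hn : 1 ≤ n) :
    0 < (TH3Seq n).1 ∧ (TH3Seq n).1 < (TH3Seq n).2.1 ∧
    (TH3Seq n).2.1 < (TH3Seq n).2.2.1 ∧ (TH3Seq n).2.2.1 < (TH3Seq n).2.2.2.1 ∧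
    (TH3Seq n).2.2.2.1 < (TH3Seq n).2.2.2.2 := by
  induction n, hn using Nat.le_induction with
  | base => decide
  | succ n hn ih =>
    obtain ⟨hf, h1, h2, h3, h4⟩ := ih
    exact TH3_step_inv (TH3Seq n) hf h1 h2 h3 h4

/-- For the Tower of Hanoi `d = 3` sequences, `f_3(n) < g_3(n) < h_3(n) < t_3(n) < s_3(n)`
for all `n ≥ 1`. -/
theorem TH3_strict_ordering (n : ℕ) (hn : 1 ≤ n) :
    (TH3Seq n).1 < (TH3Seq n).2.1 ∧ (TH3Seq n).2.1 < (TH3Seq n).2.2.1 ∧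
    (TH3Seq n).2.2.1 < (TH3Seq n).2.2.2.1 ∧ (TH3Seq n).2.2.2.1 < (TH3Seq n).2.2.2.2 := by
  obtain ⟨_, h⟩ := TH3_inv n hn
  exact h
end

section
/- Let s_3 and M_3 be the Tower of Hanoi d=3 sequences (defined by the stated recursion with initial values f_3(0)=1, g_3(0)=0, h_3(0)=1, t_3(0)=0, s_3(0)=3, M_3(n)=f_3(n)+4g_3(n)+6h_3(n)+4t_3(n)+s_3(n)), and let alpha_3(n)=f_3(n)/g_3(n), omega_3(n)=t_3(n)/s_3(n). Then for all integers 1 <= k <= n: s_3(k)^(4^(n-k)) * (1+2*omega_3(k)+2*omega_3(k)^2)^(2*(4^(n-k)-1)) * (1+omega_3(n))^4 < M_3(n) < s_3(k)^(4^(n-k)) * (1+2*alpha_3(k)+2*alpha_3(k)^2)^(2*(4^(n-k)-1)) * (1+alpha_3(n))^4, provided 0 < omega_3(m) <= gamma_3(m) <= beta_3(m) <= alpha_3(m) < 1 for all m with k <= m <= n, where beta_3 = g_3/h_3 and gamma_3 = h_3/t_3, and omega_3 is monotonically increasing while alpha_3 is monotonically decreasing on [k, n]. -/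
/-- `f_3(n)` etc. as real numbers, and the ratios of consecutive counts. -/
noncomputable def f3 (n : ℕ) : ℝ := ((TH3Seq n).1 : ℝ)
noncomputable def g3 (n : ℕ) : ℝ := ((TH3Seq n).2.1 : ℝ)
noncomputable def h3 (n : ℕ) : ℝ := ((TH3Seq n).2.2.1 : ℝ)
noncomputable def t3 (n : ℕ) : ℝ := ((TH3Seq n).2.2.2.1 : ℝ)
noncomputable def s3 (n : ℕ) : ℝ := ((TH3Seq n).2.2.2.2 : ℝ)
noncomputable def M3 (n : ℕ) : ℝ := f3 n + 4 * g3 n + 6 * h3 n + 4 * t3 n + s3 n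
noncomputable def α3 (n : ℕ) : ℝ := f3 n / g3 n
noncomputable def β3 (n : ℕ) : ℝ := g3 n / h3 n
noncomputable def γ3 (n : ℕ) : ℝ := h3 n / t3 n
noncomputable def ω3 (n : ℕ) : ℝ := t3 n / s3 n
lemma TH3_parity (m : ℕ) :
    (((TH3Seq m).1 : ZMod 2), ((TH3Seq m).2.1 : ZMod 2), ((TH3Seq m).2.2.1 : ZMod 2),
      ((TH3Seq m).2.2.2.1 : ZMod 2), ((TH3Seq m).2.2.2.2 : ZMod 2))
      = if m % 2 = 0 then ((1 : ZMod 2), (0 : ZMod 2), (1 : ZMod 2), (0 : ZMod 2), (1 : ZMod 2))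
        else ((0 : ZMod 2), (0 : ZMod 2), (0 : ZMod 2), (1 : ZMod 2), (1 : ZMod 2)) := by
  induction m with
  | zero => decide
  | succ p ih =>
    rcases Nat.mod_two_eq_zero_or_one p with hp | hp <;>
      rw [hp] at ih <;> norm_num at ih <;>
      obtain ⟨c1, c2, c3, c4, c5⟩ := ih <;>
      rw [show TH3Seq (p+1) = TH3Step (TH3Seq p) from rfl] <;>
      rw [Nat.add_mod, hp] <;> norm_num <;>
      simp only [TH3Step] <;> push_cast <;>
      rw [c1, c2, c3, c4, c5] <;> decide

lemma TH3_t2_ne (m : ℕ) :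
    ((TH3Seq m).2.2.2.1)^2 ≠ (TH3Seq m).2.2.1 * (TH3Seq m).2.2.2.2 := by
  intro hEq
  have hp := TH3_parity m
  have hc : (((TH3Seq m).2.2.2.1 : ZMod 2))^2
      = ((TH3Seq m).2.2.1 : ZMod 2) * ((TH3Seq m).2.2.2.2 : ZMod 2) := by
    exact_mod_cast congrArg (fun x : ℕ => (x : ZMod 2)) hEq
  rcases Nat.mod_two_eq_zero_or_one m with h | h <;>
    rw [h] at hp <;> norm_num at hp <;>
    obtain ⟨c1, c2, c3, c4, c5⟩ := hp <;>
    rw [c3, c4, c5] at hc <;> revert hc <;> decide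

/-- The `s`-component polynomial of the recursion, over `ℝ`. -/
def spR (G H T S : ℝ) : ℝ :=
  (G+3*H+3*T+S)^4 + 6*(G+3*H+3*T+S)^2*(G+2*H+T)^2 + 3*(G+2*H+T)^4
    + 12*(G+3*H+3*T+S)*(G+2*H+T)^2*(G+H) + 4*(G+3*H+3*T+S)*(G+H)^3
    + 4*G*(G+2*H+T)^3 + 12*(G+2*H+T)^2*(G+H)^2 + 3*(G+H)^4
    + 12*G*(G+2*H+T)*(G+H)^2 + 6*G^2*(G+H)^2 + G^4

lemma spR_mono {G H T S G' H' T' : ℝ} (hG0 : 0 ≤ G) (hH0 : 0 ≤ H) (hT0 : 0 ≤ T)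
    (hS : 0 ≤ S) (hG0' : 0 ≤ G') (hH0' : 0 ≤ H') (hT0' : 0 ≤ T')
    (hG : G ≤ G') (hH : H ≤ H') (hT : T ≤ T') : spR G H T S ≤ spR G' H' T' S := by
  unfold spR
  gcongr

lemma spR_id (S w : ℝ) : spR (S*w^3) (S*w^2) (S*w) S = S^4 * (1+2*w+2*w^2)^6 := by
  unfold spR; ring

lemma tel_exp (a A : ℝ) (q e : ℕ) : a^(q*4) * A^(e*4+6) = (a^q * A^e)^4 * A^6 := by
  rw [pow_mul, pow_add, pow_mul, mul_pow]; ring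

lemma s3_succ (m : ℕ) : s3 (m+1) = spR (g3 m) (h3 m) (t3 m) (s3 m) := by
  simp only [s3, g3, h3, t3]
  rw [show TH3Seq (m+1) = TH3Step (TH3Seq m) from rfl]
  simp only [TH3Step, spR]
  push_cast
  ring
set_option maxHeartbeats 1000000 in

/-- Lemma 3 of the paper: for `1 ≤ k ≤ n`, assuming the ratio ordering
`0 < ω_3(m) ≤ γ_3(m) ≤ β_3(m) ≤ α_3(m) < 1` on `[k, n]`, with `ω_3` increasing and
`α_3` decreasing there, the number of dimer-monomers `M_3(n)` satisfies
`s_3(k)^(4^(n-k)) (1+2ω_3(k)+2ω_3(k)²)^(2(4^(n-k)-1)) (1+ω_3(n))⁴ < M_3(n) <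
 s_3(k)^(4^(n-k)) (1+2α_3(k)+2α_3(k)²)^(2(4^(n-k)-1)) (1+α_3(n))⁴`. -/
theorem TH3_dimer_monomer_bounds (k n : ℕ) (hk : 1 ≤ k) (hkn : k ≤ n)
    (hord : ∀ m, k ≤ m → m ≤ n →
      0 < ω3 m ∧ ω3 m ≤ γ3 m ∧ γ3 m ≤ β3 m ∧ β3 m ≤ α3 m ∧ α3 m < 1)
    (hmono : ∀ m, k ≤ m → m < n → ω3 m ≤ ω3 (m + 1) ∧ α3 (m + 1) ≤ α3 m) :
    s3 k ^ (4 ^ (n - k)) * (1 + 2 * ω3 k + 2 * (ω3 k) ^ 2) ^ (2 * (4 ^ (n - k) - 1))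
        * (1 + ω3 n) ^ 4 < M3 n ∧
    M3 n < s3 k ^ (4 ^ (n - k)) * (1 + 2 * α3 k + 2 * (α3 k) ^ 2) ^ (2 * (4 ^ (n - k) - 1))
        * (1 + α3 n) ^ 4 := by
  -- basic facts pack at each stage m ∈ [k, n]
  have pack : ∀ m, k ≤ m → m ≤ n →
      0 < s3 m ∧ 0 < t3 m ∧ 0 < h3 m ∧ 0 < g3 m ∧ 0 < ω3 m ∧ 0 < α3 m ∧
      t3 m = s3 m * ω3 m ∧ s3 m * ω3 m ^ 2 ≤ h3 m ∧ s3 m * ω3 m ^ 3 ≤ g3 m ∧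
      s3 m * ω3 m ^ 4 ≤ f3 m ∧ t3 m ≤ s3 m * α3 m ∧ h3 m ≤ s3 m * α3 m ^ 2 ∧
      g3 m ≤ s3 m * α3 m ^ 3 ∧ f3 m ≤ s3 m * α3 m ^ 4 := by
    intro m hm hm'
    obtain ⟨hw, hwg, hgb, hba, ha1⟩ := hord m hm hm'
    have hs0 : (0:ℝ) ≤ s3 m := Nat.cast_nonneg _
    have ht0 : (0:ℝ) ≤ t3 m := Nat.cast_nonneg _
    have hs : 0 < s3 m := by
      rcases hs0.lt_or_eq with h | h
      · exact h
      · exfalso; rw [ω3, ← h, div_zero] at hw; exact hw.false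
    have ht : 0 < t3 m := by
      rcases ht0.lt_or_eq with h | h
      · exact h
      · exfalso; rw [ω3, ← h, zero_div] at hw; exact hw.false
    have hγ : 0 < γ3 m := lt_of_lt_of_le hw hwg
    have e2 : γ3 m * t3 m = h3 m := by rw [γ3]; exact div_mul_cancel₀ _ ht.ne'
    have hh : 0 < h3 m := by rw [← e2]; exact mul_pos hγ ht
    have hβ : 0 < β3 m := lt_of_lt_of_le hγ hgb
    have e3 : β3 m * h3 m = g3 m := by rw [β3]; exact div_mul_cancel₀ _ hh.ne'
    have hg : 0 < g3 m := by rw [← e3]; exact mul_pos hβ hh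
    have hα : 0 < α3 m := lt_of_lt_of_le hβ hba
    have e4 : α3 m * g3 m = f3 m := by rw [α3]; exact div_mul_cancel₀ _ hg.ne'
    have e1 : ω3 m * s3 m = t3 m := by rw [ω3]; exact div_mul_cancel₀ _ hs.ne'
    have hwb : ω3 m ≤ β3 m := hwg.trans hgb
    have hwa : ω3 m ≤ α3 m := hwb.trans hba
    have hγa : γ3 m ≤ α3 m := hgb.trans hba
    have b2 : s3 m * ω3 m ^ 2 ≤ h3 m := by
      calc s3 m * ω3 m ^ 2 = ω3 m * (ω3 m * s3 m) := by ring
        _ = ω3 m * t3 m := by rw [e1]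
        _ ≤ γ3 m * t3 m := mul_le_mul_of_nonneg_right hwg ht.le
        _ = h3 m := e2
    have b3 : s3 m * ω3 m ^ 3 ≤ g3 m := by
      calc s3 m * ω3 m ^ 3 = ω3 m * (s3 m * ω3 m ^ 2) := by ring
        _ ≤ ω3 m * h3 m := mul_le_mul_of_nonneg_left b2 hw.le
        _ ≤ β3 m * h3 m := mul_le_mul_of_nonneg_right hwb hh.le
        _ = g3 m := e3
    have b4 : s3 m * ω3 m ^ 4 ≤ f3 m := by
      calc s3 m * ω3 m ^ 4 = ω3 m * (s3 m * ω3 m ^ 3) := by ring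
        _ ≤ ω3 m * g3 m := mul_le_mul_of_nonneg_left b3 hw.le
        _ ≤ α3 m * g3 m := mul_le_mul_of_nonneg_right hwa hg.le
        _ = f3 m := e4
    have c1 : t3 m ≤ s3 m * α3 m := by
      calc t3 m = ω3 m * s3 m := e1.symm
        _ ≤ α3 m * s3 m := mul_le_mul_of_nonneg_right hwa hs.le
        _ = s3 m * α3 m := mul_comm _ _
    have c2 : h3 m ≤ s3 m * α3 m ^ 2 := by
      calc h3 m = γ3 m * t3 m := e2.symm
        _ ≤ α3 m * (s3 m * α3 m) := mul_le_mul hγa c1 ht0 hα.le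
        _ = s3 m * α3 m ^ 2 := by ring
    have c3 : g3 m ≤ s3 m * α3 m ^ 3 := by
      calc g3 m = β3 m * h3 m := e3.symm
        _ ≤ α3 m * (s3 m * α3 m ^ 2) := mul_le_mul hba c2 hh.le hα.le
        _ = s3 m * α3 m ^ 3 := by ring
    have c4 : f3 m ≤ s3 m * α3 m ^ 4 := by
      calc f3 m = α3 m * g3 m := e4.symm
        _ ≤ α3 m * (s3 m * α3 m ^ 3) := mul_le_mul_of_nonneg_left c3 hα.le
        _ = s3 m * α3 m ^ 4 := by ring
    exact ⟨hs, ht, hh, hg, hw, hα, by rw [← e1]; ring, b2, b3, b4, c1, c2, c3, c4⟩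
  -- monotone chains from k
  have mono : ∀ j, k + j ≤ n → ω3 k ≤ ω3 (k + j) ∧ α3 (k + j) ≤ α3 k := by
    intro j
    induction j with
    | zero => intro _; exact ⟨le_refl _, le_refl _⟩
    | succ p ih =>
      intro hle
      have hp := ih (by omega)
      have hm := hmono (k + p) (by omega) (by omega)
      exact ⟨hp.1.trans hm.1, hm.2.trans hp.2⟩
  obtain ⟨hsk, htk, hhk, hgk, hwk, hαk, _⟩ := pack k (le_refl k) hkn
  -- telescoping bounds for s3
  have tel : ∀ j, k + j ≤ n →
      s3 k ^ (4 ^ j) * (1 + 2 * ω3 k + 2 * (ω3 k) ^ 2) ^ (2 * (4 ^ j - 1)) ≤ s3 (k + j) ∧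
      s3 (k + j) ≤ s3 k ^ (4 ^ j) * (1 + 2 * α3 k + 2 * (α3 k) ^ 2) ^ (2 * (4 ^ j - 1)) := by
    intro j
    induction j with
    | zero => intro _; simp
    | succ p ih =>
      intro hle
      obtain ⟨ihl, ihr⟩ := ih (by omega)
      obtain ⟨hs, ht, hh, hg, hw, hα, e1, b2, b3, b4, c1, c2, c3, c4⟩ :=
        pack (k + p) (by omega) (by omega)
      obtain ⟨mω, mα⟩ := mono p (by omega)
      have hg0 : (0:ℝ) ≤ g3 (k+p) := hg.le
      have hAw : (1:ℝ) + 2 * ω3 k + 2 * (ω3 k) ^ 2 ≤ 1 + 2 * ω3 (k+p) + 2 * (ω3 (k+p)) ^ 2 := by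
        nlinarith [hwk.le, mω]
      have hAa : (1:ℝ) + 2 * α3 (k+p) + 2 * (α3 (k+p)) ^ 2 ≤ 1 + 2 * α3 k + 2 * (α3 k) ^ 2 := by
        nlinarith [hα.le, mα]
      have hsp : s3 (k + p + 1) = spR (g3 (k+p)) (h3 (k+p)) (t3 (k+p)) (s3 (k+p)) :=
        s3_succ (k + p)
      have low : s3 (k+p) ^ 4 * (1 + 2 * ω3 (k+p) + 2 * (ω3 (k+p)) ^ 2) ^ 6 ≤ s3 (k+p+1) := by
        rw [hsp, ← spR_id (s3 (k+p)) (ω3 (k+p))]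
        exact spR_mono (by positivity) (by positivity) (by positivity) hs.le
          hg.le hh.le ht.le b3 b2 (le_of_eq e1.symm)
      have upp : s3 (k+p+1) ≤ s3 (k+p) ^ 4 * (1 + 2 * α3 (k+p) + 2 * (α3 (k+p)) ^ 2) ^ 6 := by
        rw [hsp, ← spR_id (s3 (k+p)) (α3 (k+p))]
        exact spR_mono hg.le hh.le ht.le hs.le (by positivity) (by positivity)
          (by positivity) c3 c2 c1
      have hexp1 : (4:ℕ) ^ (p+1) = 4 ^ p * 4 := pow_succ 4 p
      have hexp0 : (1:ℕ) ≤ 4 ^ p := Nat.one_le_pow _ _ (by norm_num)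
      have hexp2 : 2 * (4 ^ (p+1) - 1) = 2 * (4 ^ p - 1) * 4 + 6 := by omega
      constructor
      · calc s3 k ^ (4 ^ (p+1)) * (1 + 2 * ω3 k + 2 * (ω3 k) ^ 2) ^ (2 * (4 ^ (p+1) - 1))
            = (s3 k ^ (4 ^ p) * (1 + 2 * ω3 k + 2 * (ω3 k) ^ 2) ^ (2 * (4 ^ p - 1))) ^ 4
              * (1 + 2 * ω3 k + 2 * (ω3 k) ^ 2) ^ 6 := by
              rw [hexp2, hexp1]; exact tel_exp _ _ (4^p) (2*(4^p-1))
          _ ≤ s3 (k+p) ^ 4 * (1 + 2 * ω3 (k+p) + 2 * (ω3 (k+p)) ^ 2) ^ 6 := by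
              have hb0 : (0:ℝ) ≤ s3 k ^ (4 ^ p)
                  * (1 + 2 * ω3 k + 2 * (ω3 k) ^ 2) ^ (2 * (4 ^ p - 1)) := by positivity
              exact mul_le_mul (pow_le_pow_left₀ hb0 ihl 4)
                (pow_le_pow_left₀ (by positivity) hAw 6) (by positivity) (by positivity)
          _ ≤ s3 (k+p+1) := low
      · calc s3 (k+p+1)
            ≤ s3 (k+p) ^ 4 * (1 + 2 * α3 (k+p) + 2 * (α3 (k+p)) ^ 2) ^ 6 := upp
          _ ≤ (s3 k ^ (4 ^ p) * (1 + 2 * α3 k + 2 * (α3 k) ^ 2) ^ (2 * (4 ^ p - 1))) ^ 4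
              * (1 + 2 * α3 k + 2 * (α3 k) ^ 2) ^ 6 := by
              exact mul_le_mul (pow_le_pow_left₀ hs.le ihr 4)
                (pow_le_pow_left₀ (by positivity) hAa 6) (by positivity) (by positivity)
          _ = s3 k ^ (4 ^ (p+1)) * (1 + 2 * α3 k + 2 * (α3 k) ^ 2) ^ (2 * (4 ^ (p+1) - 1)) := by
              rw [hexp2, hexp1]; exact (tel_exp _ _ (4^p) (2*(4^p-1))).symm
  obtain ⟨tl, tu⟩ := tel (n - k) (by omega)
  rw [Nat.add_sub_cancel' hkn] at tl tu
  -- facts at stage n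
  obtain ⟨hs, ht, hh, hg, hw, hα, e1, b2, b3, b4, c1, c2, c3, c4⟩ :=
    pack n hkn (le_refl n)
  -- strictness via parity
  have hne2 : (t3 n) ^ 2 ≠ h3 n * s3 n := by
    have hne := TH3_t2_ne n
    intro hc; apply hne
    simp only [t3, h3, s3] at hc
    exact_mod_cast hc
  have b2s : s3 n * ω3 n ^ 2 < h3 n := by
    refine lt_of_le_of_ne b2 fun hEq => hne2 ?_
    rw [e1, ← hEq]; ring
  have hω2α2 : ω3 n ^ 2 < α3 n ^ 2 :=
    lt_of_mul_lt_mul_left (b2s.trans_le c2) hs.le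
  have hωα : ω3 n < α3 n := lt_of_pow_lt_pow_left₀ 2 hα.le hω2α2
  have tstrict : t3 n < s3 n * α3 n := by
    rw [e1]; exact mul_lt_mul_of_pos_left hωα hs
  have Mlow : s3 n * (1 + ω3 n) ^ 4 < M3 n := by
    rw [M3]; nlinarith [b4, b3, b2s, e1, hs, hw]
  have Mupp : M3 n < s3 n * (1 + α3 n) ^ 4 := by
    rw [M3]; nlinarith [c4, c3, c2, tstrict, hs, hα]
  constructor
  · calc s3 k ^ (4 ^ (n-k)) * (1 + 2 * ω3 k + 2 * (ω3 k) ^ 2) ^ (2 * (4 ^ (n-k) - 1))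
          * (1 + ω3 n) ^ 4
        ≤ s3 n * (1 + ω3 n) ^ 4 := by
          apply mul_le_mul_of_nonneg_right tl (by positivity)
      _ < M3 n := Mlow
  · calc M3 n < s3 n * (1 + α3 n) ^ 4 := Mupp
      _ ≤ s3 k ^ (4 ^ (n-k)) * (1 + 2 * α3 k + 2 * (α3 k) ^ 2) ^ (2 * (4 ^ (n-k) - 1))
          * (1 + α3 n) ^ 4 := by
          apply mul_le_mul_of_nonneg_right tu (by positivity)
end
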